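/- Let Y be a real Banach space, Ω ⊆ Y an open set containing 0, and T : Ω → Y a map with T(0) = 0. Suppose there are p > 1, constants M, δ > 0 with ‖T(x) - L x‖ ≤ M‖x‖^p for all x ∈ Ω with ‖x‖ ≤ δ, where L : Y → Y is a continuous linear operator whose spectral radius r(L) = lim_{n→∞} ‖Lⁿ‖^{1/n} satisfies r(L) > 1. Then 0 is an unstable fixed point of T in the following sense: there exists ε₀ > 0 such that the closed ball of radius ε₀ about 0 is contained in Ω and, for every η > 0, there exist y ∈ Ω with ‖y‖ < η and an integer N ≥ 1 such that the iterates T^k(y) are defined and satisfy ‖T^k(y)‖ < ε₀ for all 0 ≤ k < N, while ‖T^N(y)‖ ≥ ε₀. -/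

import Mathlib

open Filter

/-- Telescoping identity for the difference between nonlinear and linear iterates. -/
lemma henry_iterate_sub_pow {Y : Type*} [NormedAddCommGroup Y] [NormedSpace ℝ Y]
    (T : Y → Y) (L : Y →L[ℝ] Y) (y : Y) :
    ∀ k : ℕ, T^[k] y - (L ^ k) y
      = ∑ j ∈ Finset.range k, (L ^ (k - 1 - j)) (T (T^[j] y) - L (T^[j] y)) := by
  intro k
  induction k with
  | zero => simp
  | succ k ih =>
    have h1 : (L ^ (k + 1)) y = L ((L ^ k) y) := by
      rw [pow_succ']; rfl
    have h2 : T^[k+1] y - (L ^ (k+1)) y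
        = (T (T^[k] y) - L (T^[k] y)) + L (T^[k] y - (L ^ k) y) := by
      rw [Function.iterate_succ_apply', h1, map_sub]; abel
    rw [h2, ih, map_sum]
    have h3 : ∀ j ∈ Finset.range k,
        L ((L ^ (k - 1 - j)) (T (T^[j] y) - L (T^[j] y)))
          = (L ^ (k - j)) (T (T^[j] y) - L (T^[j] y)) := by
      intro j hj
      rw [Finset.mem_range] at hj
      have hkj : k - j = (k - 1 - j) + 1 := by omega
      rw [hkj, pow_succ']; rfl
    rw [Finset.sum_congr rfl h3, Finset.sum_range_succ]
    have h4 : ∀ j ∈ Finset.range k,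
        (L ^ (k - j)) (T (T^[j] y) - L (T^[j] y))
          = (L ^ (k + 1 - 1 - j)) (T (T^[j] y) - L (T^[j] y)) := by
      intro j hj
      have hkj2 : k - j = k + 1 - 1 - j := by omega
      rw [hkj2]
    rw [Finset.sum_congr rfl h4]
    have h5 : (L ^ (k + 1 - 1 - k)) (T (T^[k] y) - L (T^[k] y))
        = T (T^[k] y) - L (T^[k] y) := by
      have : k + 1 - 1 - k = 0 := by omega
      rw [this, pow_zero]; rfl
    rw [h5]
    abel

/-- Baire category argument: if `b < r = lim ‖Lⁿ‖^{1/n}`, there is a vector whose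
orbit under `L` has unbounded growth relative to `bⁿ`. -/
lemma henry_exists_unbounded_orbit {Y : Type*} [NormedAddCommGroup Y] [NormedSpace ℝ Y]
    [CompleteSpace Y] (L : Y →L[ℝ] Y) (b r : ℝ) (hb : 1 < b) (hbr : b < r)
    (hrlim : Tendsto (fun n : ℕ => ‖(L ^ n : Y →L[ℝ] Y)‖ ^ ((1:ℝ)/n)) atTop (nhds r)) :
    ∃ x : Y, ∀ c : ℝ, ∃ j : ℕ, c * b ^ j < ‖(L ^ j) x‖ := by
  by_contra hcon
  push_neg at hcon
  -- hcon : ∀ x, ∃ c, ∀ j, ‖(L^j) x‖ ≤ c * b ^ j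
  have hb0 : (0:ℝ) < b := lt_trans one_pos hb
  -- The sets E k cover Y
  set E : ℕ → Set Y := fun k => {x | ∀ j : ℕ, ‖(L ^ j) x‖ ≤ (k:ℝ) * b ^ j} with hE
  have hclosed : ∀ k, IsClosed (E k) := by
    intro k
    have : E k = ⋂ j : ℕ, {x | ‖(L ^ j) x‖ ≤ (k:ℝ) * b ^ j} := by
      ext z; simp [hE, Set.mem_iInter]
    rw [this]
    exact isClosed_iInter fun j =>
      isClosed_le ((L ^ j).continuous.norm) continuous_const
  have hcover : (⋃ k, E k) = Set.univ := by
    ext z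
    simp only [Set.mem_iUnion, Set.mem_univ, iff_true]
    obtain ⟨c, hc⟩ := hcon z
    refine ⟨⌈c⌉₊, fun j => le_trans (hc j) ?_⟩
    have : c ≤ (⌈c⌉₊ : ℝ) := Nat.le_ceil c
    have hbj : (0:ℝ) ≤ b ^ j := le_of_lt (pow_pos hb0 j)
    nlinarith
  obtain ⟨k, hk⟩ := nonempty_interior_of_iUnion_of_closed hclosed hcover
  obtain ⟨x₀, hx₀⟩ := hk
  rw [mem_interior_iff_mem_nhds, Metric.mem_nhds_iff] at hx₀
  obtain ⟨t, ht0, ht⟩ := hx₀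
  -- derive an operator norm bound
  have hub : ∀ j : ℕ, ‖(L ^ j : Y →L[ℝ] Y)‖ ≤ (4 * k / t) * b ^ j := by
    intro j
    have hx₀mem : x₀ ∈ E k := ht (Metric.mem_ball_self ht0)
    refine ContinuousLinearMap.opNorm_le_bound _ (by positivity) (fun z => ?_)
    rcases eq_or_ne z 0 with rfl | hz
    · simp
    · have hznorm : (0:ℝ) < ‖z‖ := norm_pos_iff.mpr hz
      set v := (t / (2 * ‖z‖)) • z with hv
      have hvnorm : ‖v‖ = t / 2 := by
        rw [hv, norm_smul, Real.norm_of_nonneg (by positivity)]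
        field_simp
      have hvball : x₀ + v ∈ Metric.ball x₀ t := by
        rw [Metric.mem_ball, dist_eq_norm]
        simp only [add_sub_cancel_left]
        rw [hvnorm]; linarith
      have hmem : x₀ + v ∈ E k := ht hvball
      have h1 : ‖(L ^ j) v‖ ≤ 2 * k * b ^ j := by
        have h2 : (L ^ j) v = (L ^ j) (x₀ + v) - (L ^ j) x₀ := by
          rw [map_add]; abel
        rw [h2]
        calc ‖(L ^ j) (x₀ + v) - (L ^ j) x₀‖
            ≤ ‖(L ^ j) (x₀ + v)‖ + ‖(L ^ j) x₀‖ := norm_sub_le _ _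
          _ ≤ (k:ℝ) * b ^ j + (k:ℝ) * b ^ j := add_le_add (hmem j) (hx₀mem j)
          _ = 2 * k * b ^ j := by ring
      have h3 : (L ^ j) v = (t / (2 * ‖z‖)) • (L ^ j) z := by
        rw [hv, map_smul]
      have h4 : ‖(L ^ j) v‖ = (t / (2 * ‖z‖)) * ‖(L ^ j) z‖ := by
        rw [h3, norm_smul, Real.norm_of_nonneg (by positivity)]
      rw [h4] at h1
      rw [div_mul_eq_mul_div, div_le_iff₀ (by positivity : (0:ℝ) < 2 * ‖z‖)] at h1
      have h5 : ‖(L ^ j) z‖ ≤ 4 * k * b ^ j * ‖z‖ / t := by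
        rw [le_div_iff₀ ht0]
        nlinarith
      refine le_trans h5 (le_of_eq (by ring))
  -- now contradict the limit
  set C : ℝ := max (4 * k / t) 1 with hC
  have hC1 : (1:ℝ) ≤ C := le_max_right _ _
  have hC0 : (0:ℝ) < C := lt_of_lt_of_le one_pos hC1
  have hub2 : ∀ j : ℕ, ‖(L ^ j : Y →L[ℝ] Y)‖ ≤ C * b ^ j := fun j =>
    le_trans (hub j) (mul_le_mul_of_nonneg_right (le_max_left _ _)
      (le_of_lt (pow_pos hb0 j)))
  have htend1 : Tendsto (fun j : ℕ => C ^ ((1:ℝ)/j) * b) atTop (nhds b) := by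
    have h1 : Tendsto (fun j : ℕ => Real.log C * (1/j)) atTop (nhds 0) := by
      have := tendsto_one_div_atTop_nhds_zero_nat.const_mul (Real.log C)
      simpa using this
    have h2 : Tendsto (fun j : ℕ => Real.exp (Real.log C * (1/j))) atTop (nhds 1) := by
      have := (Real.continuous_exp.tendsto 0).comp h1
      simpa [Function.comp_def] using this
    have h4 := h2.mul_const b
    rw [one_mul] at h4
    refine h4.congr (fun j => ?_)
    rw [Real.rpow_def_of_pos hC0]
  have hleb : r ≤ b := by
    refine le_of_tendsto_of_tendsto hrlim htend1 ?_
    filter_upwards [eventually_ge_atTop 1] with j hj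
    have hj0 : (j:ℝ) ≠ 0 := by positivity
    have hCb : ‖(L ^ j : Y →L[ℝ] Y)‖ ^ ((1:ℝ)/j) ≤ (C * b ^ j) ^ ((1:ℝ)/j) :=
      Real.rpow_le_rpow (norm_nonneg _) (hub2 j) (by positivity)
    refine le_trans hCb (le_of_eq ?_)
    rw [Real.mul_rpow (le_of_lt hC0) (le_of_lt (pow_pos hb0 j))]
    congr 1
    rw [← Real.rpow_natCast b j, ← Real.rpow_mul (le_of_lt hb0)]
    rw [show (j:ℝ) * ((1:ℝ)/j) = 1 by field_simp, Real.rpow_one]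
  exact absurd hleb (not_le.mpr hbr)

set_option maxHeartbeats 1600000 in
/-- Instability of a fixed point from linear instability
(Henry–Perez–Wreszinski). If `T(0) = 0`, `T` is well approximated near `0`
by a continuous linear operator `L` with spectral radius
`r(L) = lim ‖Lⁿ‖^{1/n} > 1`, then `0` is an unstable fixed point of `T`. -/
theorem henry_instability {Y : Type*} [NormedAddCommGroup Y] [NormedSpace ℝ Y]
    [CompleteSpace Y] (Ω : Set Y) (hΩ : IsOpen Ω) (h0 : (0:Y) ∈ Ω)
    (T : Y → Y) (hT0 : T 0 = 0) (p M δ : ℝ) (hp : 1 < p) (hM : 0 < M)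
    (hδ : 0 < δ) (L : Y →L[ℝ] Y)
    (happrox : ∀ x ∈ Ω, ‖x‖ ≤ δ → ‖T x - L x‖ ≤ M * ‖x‖ ^ p)
    (r : ℝ)
    (hrlim : Tendsto (fun n : ℕ => ‖(L ^ n : Y →L[ℝ] Y)‖ ^ ((1:ℝ)/n)) atTop (nhds r))
    (hr : 1 < r) :
    ∃ ε₀ > 0, Metric.closedBall (0:Y) ε₀ ⊆ Ω ∧
      ∀ η > 0, ∃ y ∈ Ω, ‖y‖ < η ∧ ∃ N : ℕ, 1 ≤ N ∧
        (∀ k < N, ‖T^[k] y‖ < ε₀) ∧ ε₀ ≤ ‖T^[N] y‖ := by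
  classical
  have hr0 : (0:ℝ) < r := lt_trans one_pos hr
  have hp0 : (0:ℝ) < p := lt_trans one_pos hp
  have hp1 : (0:ℝ) < p - 1 := by linarith
  -- choose b with 1 < b < r and b^p > r
  set θ : ℝ := (1 + 1/p) / 2 with hθ
  have hθ0 : 0 < θ := by
    have : (0:ℝ) < 1/p := by positivity
    rw [hθ]; linarith
  have hθ1 : θ < 1 := by
    have h1 : 1/p < 1 := by
      rw [div_lt_one hp0]; exact hp
    rw [hθ]; linarith
  have hθp : 1 < θ * p := by
    have : θ * p = (p + 1) / 2 := by rw [hθ]; field_simp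
    rw [this]; linarith
  set b : ℝ := r ^ θ with hbdef
  have hb0 : (0:ℝ) < b := Real.rpow_pos_of_pos hr0 θ
  have hb1 : (1:ℝ) < b := Real.one_lt_rpow_iff_of_pos hr0 |>.mpr (Or.inl ⟨hr, hθ0⟩)
  have hbr : b < r := by
    have := Real.rpow_lt_rpow_of_exponent_lt hr (show θ < 1 from hθ1)
    simpa [hbdef] using this
  set B : ℝ := b ^ p with hBdef
  have hB0 : (0:ℝ) < B := Real.rpow_pos_of_pos hb0 p
  have hrB : r < B := by
    have h1 : B = r ^ (θ * p) := by
      rw [hBdef, hbdef, ← Real.rpow_mul (le_of_lt hr0)]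
    have h2 : r ^ (1:ℝ) < r ^ (θ * p) := Real.rpow_lt_rpow_of_exponent_lt hr hθp
    rw [h1]; simpa using h2
  have hB1 : (1:ℝ) < B := lt_trans hr hrB
  -- powers of B versus powers of b
  have hBpow : ∀ m : ℕ, B ^ m = (b ^ m : ℝ) ^ p := by
    intro m
    rw [hBdef, ← Real.rpow_natCast (b ^ p) m, ← Real.rpow_natCast b m,
      ← Real.rpow_mul (le_of_lt hb0), ← Real.rpow_mul (le_of_lt hb0), mul_comm]
  -- summability of u i / B^i
  set u : ℕ → ℝ := fun i => ‖(L ^ i : Y →L[ℝ] Y)‖ with hu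
  have hu0 : ∀ i, 0 ≤ u i := fun i => norm_nonneg _
  set g : ℕ → ℝ := fun i => u i / B ^ i with hg
  have hg0 : ∀ i, 0 ≤ g i := fun i => div_nonneg (hu0 i) (le_of_lt (pow_pos hB0 i))
  have hsummable : Summable g := by
    set β : ℝ := (r + B) / 2 with hβ
    have hβr : r < β := by rw [hβ]; linarith
    have hβB : β < B := by rw [hβ]; linarith
    have hβ0 : (0:ℝ) < β := lt_trans hr0 hβr
    -- eventually u i ≤ β ^ i
    have hev : ∀ᶠ i : ℕ in atTop, u i ≤ β ^ i := by
      have h1 : ∀ᶠ i : ℕ in atTop, u i ^ ((1:ℝ)/i) < β :=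
        hrlim.eventually_lt_const hβr
      filter_upwards [h1, eventually_ge_atTop 1] with i hi hi1
      have hi0 : (i:ℝ) ≠ 0 := by positivity
      have h2 : (u i ^ ((1:ℝ)/i)) ^ (i:ℕ) ≤ β ^ (i:ℕ) :=
        pow_le_pow_left₀ (Real.rpow_nonneg (hu0 i) _) (le_of_lt hi) i
      have h3 : (u i ^ ((1:ℝ)/i)) ^ (i:ℕ) = u i := by
        rw [← Real.rpow_natCast (u i ^ ((1:ℝ)/i)) i, ← Real.rpow_mul (hu0 i)]
        rw [show (1:ℝ)/i * i = 1 by field_simp, Real.rpow_one]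
      rwa [h3] at h2
    rw [eventually_atTop] at hev
    obtain ⟨i₀, hi₀⟩ := hev
    rw [← summable_nat_add_iff i₀]
    have hratio : (0:ℝ) ≤ β / B := by positivity
    have hratio1 : β / B < 1 := by rw [div_lt_one hB0]; exact hβB
    have hgeo : Summable (fun i : ℕ => (β / B) ^ i₀ * (β / B) ^ i) :=
      (summable_geometric_of_lt_one hratio hratio1).mul_left _
    refine Summable.of_nonneg_of_le (fun i => hg0 _) (fun i => ?_) hgeo
    have h4 : g (i + i₀) ≤ (β / B) ^ (i + i₀) := by
      simp only [hg, div_eq_mul_inv, mul_pow, inv_pow]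
      exact mul_le_mul_of_nonneg_right (hi₀ (i + i₀) (by omega)) (by positivity)
    calc g (i + i₀) ≤ (β / B) ^ (i + i₀) := h4
      _ = (β / B) ^ i₀ * (β / B) ^ i := by rw [← pow_add, add_comm]
  set C₆ : ℝ := ∑' i, g i with hC₆
  have hC₆0 : 0 ≤ C₆ := tsum_nonneg hg0
  have hC₆sum : ∀ k : ℕ, ∑ j ∈ Finset.range k, g j ≤ C₆ :=
    fun k => Summable.sum_le_tsum (Finset.range k) (fun i _ => hg0 i) hsummable
  -- choose ε₀
  obtain ⟨ρ, hρ0, hρΩ⟩ := Metric.isOpen_iff.mp hΩ 0 h0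
  set K : ℝ := M * C₆ + 1 with hK
  have hK0 : (0:ℝ) < K := by positivity
  set e : ℝ := (1 / (8 * K)) ^ ((1:ℝ)/(p-1)) / 4 with he
  have he0 : (0:ℝ) < e := by
    have := Real.rpow_pos_of_pos (show (0:ℝ) < 1/(8*K) by positivity) ((1:ℝ)/(p-1))
    rw [he]; positivity
  set ε₀ : ℝ := min (min (ρ/2) δ) e with hε₀def
  have hε₀0 : 0 < ε₀ := by
    rw [hε₀def]
    exact lt_min (lt_min (by positivity) hδ) he0
  have hε₀δ : ε₀ ≤ δ := le_trans (min_le_left _ _) (min_le_right _ _)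
  have hε₀e : ε₀ ≤ e := min_le_right _ _
  have hball : Metric.closedBall (0:Y) ε₀ ⊆ Ω := by
    refine Set.Subset.trans (Metric.closedBall_subset_ball ?_) hρΩ
    have : ε₀ ≤ ρ/2 := le_trans (min_le_left _ _) (min_le_left _ _)
    linarith
  -- the smallness property of ε₀
  have hsmall : M * C₆ * (4 * ε₀) ^ (p - 1) ≤ 1/8 := by
    have h1 : (4 * ε₀) ^ (p-1) ≤ (4 * e) ^ (p-1) :=
      Real.rpow_le_rpow (by positivity) (by linarith) (le_of_lt hp1)
    have h2 : (4 * e) ^ (p-1) = 1 / (8 * K) := by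
      rw [he]
      rw [show (4:ℝ) * ((1 / (8 * K)) ^ ((1:ℝ)/(p-1)) / 4) = (1 / (8 * K)) ^ ((1:ℝ)/(p-1))
        by ring]
      rw [← Real.rpow_mul (by positivity)]
      rw [show (1:ℝ)/(p-1) * (p-1) = 1 by field_simp, Real.rpow_one]
    have h3 : M * C₆ ≤ K := by rw [hK]; linarith
    have h4 : (0:ℝ) ≤ (4 * ε₀) ^ (p-1) := Real.rpow_nonneg (by positivity) _
    calc M * C₆ * (4 * ε₀) ^ (p - 1) ≤ K * (4 * e) ^ (p-1) := by
          apply mul_le_mul h3 h1 h4 (le_of_lt hK0)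
      _ = K * (1 / (8 * K)) := by rw [h2]
      _ = 1/8 := by field_simp
  -- get the vector with unbounded orbit growth
  obtain ⟨x, hx⟩ := henry_exists_unbounded_orbit L b r hb1 hbr hrlim
  have hxne : x ≠ 0 := by
    intro h
    obtain ⟨j, hj⟩ := hx 1
    rw [h, map_zero, norm_zero] at hj
    have : (0:ℝ) < b ^ j := pow_pos hb0 j
    linarith
  set x' : Y := ‖x‖⁻¹ • x with hx'
  have hxnorm : (0:ℝ) < ‖x‖ := norm_pos_iff.mpr hxne
  have hx'norm : ‖x'‖ = 1 := by
    rw [hx', norm_smul, Real.norm_of_nonneg (by positivity), inv_mul_cancel₀ (ne_of_gt hxnorm)]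
  have hx'growth : ∀ c : ℝ, ∃ j : ℕ, c * b ^ j < ‖(L ^ j) x'‖ := by
    intro c
    obtain ⟨j, hj⟩ := hx (c * ‖x‖)
    refine ⟨j, ?_⟩
    have h1 : (L ^ j) x' = ‖x‖⁻¹ • (L ^ j) x := by rw [hx', map_smul]
    rw [h1, norm_smul, Real.norm_of_nonneg (by positivity)]
    rw [← mul_lt_mul_iff_right₀ hxnorm]
    have h2 : ‖x‖ * (‖x‖⁻¹ * ‖(L ^ j) x‖) = ‖(L ^ j) x‖ := by
      field_simp
    rw [h2]
    calc ‖x‖ * (c * b ^ j) = c * ‖x‖ * b ^ j := by ring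
      _ < ‖(L ^ j) x‖ := hj
  refine ⟨ε₀, hε₀0, hball, ?_⟩
  intro η hη
  -- choose Q and the record time n
  set Q : ℝ := max 4 (4 * ε₀ / η) with hQ
  have hQ4 : (4:ℝ) ≤ Q := le_max_left _ _
  have hQη : 4 * ε₀ / η ≤ Q := le_max_right _ _
  have hQ0 : (0:ℝ) < Q := lt_of_lt_of_le (by norm_num) hQ4
  have hexists : ∃ j : ℕ, Q * b ^ j ≤ ‖(L ^ j) x'‖ := by
    obtain ⟨j, hj⟩ := hx'growth Q
    exact ⟨j, le_of_lt hj⟩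
  set n : ℕ := Nat.find hexists with hn
  have hnspec : Q * b ^ n ≤ ‖(L ^ n) x'‖ := Nat.find_spec hexists
  have hmin : ∀ i, i < n → ‖(L ^ i) x'‖ < Q * b ^ i := by
    intro i hi
    have := Nat.find_min hexists hi
    linarith [not_le.mp this]
  -- define s and y
  have hbn : (0:ℝ) < b ^ n := pow_pos hb0 n
  set s : ℝ := 2 * ε₀ / (Q * b ^ n) with hs
  have hs0 : (0:ℝ) < s := by positivity
  have hQbns : Q * b ^ n * s = 2 * ε₀ := by
    rw [hs]; field_simp
  set y : Y := s • x' with hy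
  have hynorm : ‖y‖ = s := by
    rw [hy, norm_smul, Real.norm_of_nonneg (le_of_lt hs0), hx'norm, mul_one]
  have hbn1 : (1:ℝ) ≤ b ^ n := one_le_pow₀ (le_of_lt hb1)
  have hyη : ‖y‖ < η := by
    rw [hynorm]
    have h1 : 4 * ε₀ ≤ Q * η := by
      rw [div_le_iff₀ hη] at hQη; linarith
    have h2a : 4 * ε₀ * 1 ≤ Q * η * b ^ n :=
      mul_le_mul h1 hbn1 zero_le_one (by positivity)
    rw [hs, div_lt_iff₀ (by positivity)]
    nlinarith
  have hsε₀ : s ≤ ε₀ / 2 := by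
    rw [hs, div_le_iff₀ (by positivity)]
    nlinarith [mul_le_mul hQ4 hbn1 zero_le_one (le_of_lt hQ0), hε₀0]
  have hyΩ : y ∈ Ω := by
    apply hball
    rw [Metric.mem_closedBall, dist_zero_right, hynorm]
    linarith
  -- main claim: the orbit exits the ball of radius ε₀ by time n
  have hmain : ∃ k, k ≤ n ∧ ε₀ ≤ ‖T^[k] y‖ := by
    by_contra hcon
    push_neg at hcon
    -- hcon : ∀ k ≤ n, ‖T^[k] y‖ < ε₀
    have key : ∀ k, k ≤ n → ‖T^[k] y - (L ^ k) y‖ ≤ 4⁻¹ * (Q * b ^ (k-1) * s) := by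
      intro k
      induction k using Nat.strong_induction_on with
      | _ k ih =>
        intro hkn
        -- orbit bound for earlier times
        have horb2 : ∀ j, j < k → ‖T^[j] y‖ ≤ 2 * Q * b ^ j * s := by
          intro j hj
          have hjn : j < n := lt_of_lt_of_le hj hkn
          have hbj : (0:ℝ) < b ^ j := pow_pos hb0 j
          have hLjy : ‖(L ^ j) y‖ ≤ Q * b ^ j * s := by
            have h1 : (L ^ j) y = s • (L ^ j) x' := by rw [hy, map_smul]
            rw [h1, norm_smul, Real.norm_of_nonneg (le_of_lt hs0)]
            have h2 := le_of_lt (hmin j hjn)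
            nlinarith
          have hej := ih j hj (le_of_lt hjn)
          have htri : ‖T^[j] y‖ ≤ ‖(L ^ j) y‖ + ‖T^[j] y - (L ^ j) y‖ := by
            have h3 : T^[j] y = (L ^ j) y + (T^[j] y - (L ^ j) y) := by abel
            calc ‖T^[j] y‖ = ‖(L ^ j) y + (T^[j] y - (L ^ j) y)‖ := by rw [← h3]
              _ ≤ _ := norm_add_le _ _
          have hbj1 : b ^ (j-1) ≤ b ^ j := pow_le_pow_right₀ (le_of_lt hb1) (by omega)
          nlinarith
        -- the telescoping estimate
        rw [henry_iterate_sub_pow T L y k]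
        have hz : (0:ℝ) < 2*Q*b^(k-1)*s := by positivity
        have hterm : ∀ j ∈ Finset.range k,
            ‖(L ^ (k-1-j)) (T (T^[j] y) - L (T^[j] y))‖
              ≤ M * (2*Q*s) ^ p * (g (k-1-j) * ((b:ℝ) ^ (k-1)) ^ p) := by
          intro j hj
          rw [Finset.mem_range] at hj
          have hTj : ‖T^[j] y‖ < ε₀ := hcon j (le_trans (Nat.le_of_lt hj) hkn)
          have hTjδ : ‖T^[j] y‖ ≤ δ := le_trans (le_of_lt hTj) hε₀δ
          have hTjΩ : T^[j] y ∈ Ω := by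
            apply hball
            rw [Metric.mem_closedBall, dist_zero_right]
            exact le_of_lt (lt_of_lt_of_le hTj (le_refl _))
          have h1 : ‖(L ^ (k-1-j)) (T (T^[j] y) - L (T^[j] y))‖
              ≤ u (k-1-j) * ‖T (T^[j] y) - L (T^[j] y)‖ := (L ^ (k-1-j)).le_opNorm _
          have h2 : ‖T (T^[j] y) - L (T^[j] y)‖ ≤ M * ‖T^[j] y‖ ^ p :=
            happrox _ hTjΩ hTjδ
          have h3 : ‖T^[j] y‖ ^ p ≤ (2*Q*b^j*s) ^ p :=
            Real.rpow_le_rpow (norm_nonneg _) (horb2 j hj) (le_of_lt hp0)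
          have h4 : ((2*Q*b^j*s:ℝ)) ^ p = (2*Q*s) ^ p * ((b:ℝ)^j) ^ p := by
            rw [← Real.mul_rpow (by positivity) (by positivity)]
            congr 1; ring
          have h5 : u (k-1-j) * ((b:ℝ)^j) ^ p = g (k-1-j) * ((b:ℝ)^(k-1)) ^ p := by
            have hBne : (B:ℝ) ^ (k-1-j) ≠ 0 := ne_of_gt (pow_pos hB0 _)
            have hgu : u (k-1-j) = g (k-1-j) * B ^ (k-1-j) := by
              simp only [hg]; field_simp
            rw [hgu, hBpow (k-1-j), mul_assoc,
              ← Real.mul_rpow (le_of_lt (pow_pos hb0 _)) (le_of_lt (pow_pos hb0 _)),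
              ← pow_add]
            have hjk : (k-1-j) + j = k-1 := by omega
            rw [hjk]
          calc ‖(L ^ (k-1-j)) (T (T^[j] y) - L (T^[j] y))‖
              ≤ u (k-1-j) * (M * ‖T^[j] y‖ ^ p) := by
                refine le_trans h1 ?_
                exact mul_le_mul_of_nonneg_left h2 (hu0 _)
            _ ≤ u (k-1-j) * (M * ((2*Q*b^j*s) ^ p)) := by
                refine mul_le_mul_of_nonneg_left ?_ (hu0 _)
                exact mul_le_mul_of_nonneg_left h3 (le_of_lt hM)
            _ = M * (2*Q*s) ^ p * (u (k-1-j) * ((b:ℝ)^j) ^ p) := by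
                rw [h4]; ring
            _ = M * (2*Q*s) ^ p * (g (k-1-j) * ((b:ℝ)^(k-1)) ^ p) := by rw [h5]
        calc ‖∑ j ∈ Finset.range k, (L ^ (k - 1 - j)) (T (T^[j] y) - L (T^[j] y))‖
            ≤ ∑ j ∈ Finset.range k,
                ‖(L ^ (k - 1 - j)) (T (T^[j] y) - L (T^[j] y))‖ :=
              norm_sum_le _ _
          _ ≤ ∑ j ∈ Finset.range k,
                M * (2*Q*s) ^ p * (g (k-1-j) * ((b:ℝ) ^ (k-1)) ^ p) :=
              Finset.sum_le_sum hterm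
          _ = M * (2*Q*s) ^ p * ((b:ℝ) ^ (k-1)) ^ p * ∑ j ∈ Finset.range k, g (k-1-j) := by
              rw [Finset.mul_sum]
              refine Finset.sum_congr rfl (fun j _ => by ring)
          _ ≤ M * (2*Q*s) ^ p * ((b:ℝ) ^ (k-1)) ^ p * C₆ := by
              refine mul_le_mul_of_nonneg_left ?_ (by positivity)
              rw [Finset.sum_range_reflect]
              exact hC₆sum k
          _ = M * C₆ * ((2*Q*b^(k-1)*s) ^ p) := by
              rw [show ((2*Q*b^(k-1)*s:ℝ)) ^ p = (2*Q*s) ^ p * ((b:ℝ)^(k-1)) ^ p by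
                rw [← Real.mul_rpow (by positivity) (by positivity)]; congr 1; ring]
              ring
          _ = M * C₆ * ((2*Q*b^(k-1)*s) ^ (p-1) * (2*Q*b^(k-1)*s)) := by
              congr 1
              rw [← Real.rpow_add_one (ne_of_gt hz) (p-1)]
              congr 1; ring
          _ ≤ 4⁻¹ * (Q * b ^ (k-1) * s) := by
              have hz4 : 2*Q*b^(k-1)*s ≤ 4*ε₀ := by
                have hbkn : b^(k-1) ≤ b^n := pow_le_pow_right₀ (le_of_lt hb1) (by omega)
                nlinarith
              have hzp : (2*Q*b^(k-1)*s) ^ (p-1) ≤ (4*ε₀) ^ (p-1) :=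
                Real.rpow_le_rpow (le_of_lt hz) hz4 (le_of_lt hp1)
              have h6 : M * C₆ * ((2*Q*b^(k-1)*s) ^ (p-1)) ≤ 1/8 := by
                refine le_trans ?_ hsmall
                exact mul_le_mul_of_nonneg_left hzp (by positivity)
              have h7 : (0:ℝ) ≤ (2*Q*b^(k-1)*s) ^ (p-1) :=
                Real.rpow_nonneg (le_of_lt hz) _
              nlinarith
    -- contradiction at time n
    have hfinal := key n le_rfl
    have hLny : Q * b ^ n * s ≤ ‖(L ^ n) y‖ := by
      have h1 : (L ^ n) y = s • (L ^ n) x' := by rw [hy, map_smul]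
      rw [h1, norm_smul, Real.norm_of_nonneg (le_of_lt hs0)]
      nlinarith [hnspec]
    have hen : ‖T^[n] y - (L ^ n) y‖ ≤ ε₀ / 2 := by
      refine le_trans hfinal ?_
      have h1 : b^(n-1) ≤ b^n := pow_le_pow_right₀ (le_of_lt hb1) (by omega)
      nlinarith
    have htri : ‖(L ^ n) y‖ ≤ ‖T^[n] y‖ + ‖T^[n] y - (L ^ n) y‖ := by
      have h3 : (L ^ n) y = T^[n] y - (T^[n] y - (L ^ n) y) := by abel
      calc ‖(L ^ n) y‖ = ‖T^[n] y - (T^[n] y - (L ^ n) y)‖ := by rw [← h3]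
        _ ≤ _ := norm_sub_le _ _
    have hTn : ε₀ ≤ ‖T^[n] y‖ := by linarith
    exact absurd (hcon n le_rfl) (not_lt.mpr hTn)
  -- extract the first exit time
  obtain ⟨k₀, _, hk₀⟩ := hmain
  have hexN : ∃ k, ε₀ ≤ ‖T^[k] y‖ := ⟨k₀, hk₀⟩
  refine ⟨y, hyΩ, hyη, Nat.find hexN, ?_, ?_, Nat.find_spec hexN⟩
  · rcases Nat.eq_zero_or_pos (Nat.find hexN) with h | h
    · exfalso
      have := Nat.find_spec hexN
      rw [h, Function.iterate_zero_apply, hynorm] at this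
      linarith
    · exact h
  · intro k hk
    exact not_le.mp (Nat.find_min hexN hk)
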